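/- (One-step dual distance inequality, proof of Lemma 3) Let λ ∈ ℝᵐ, η ≥ 0, let x⁺ ∈ ℝⁿ be an η-approximate solution of the AL subproblem at λ, and set λ⁺ := λ + β(Ax⁺ − b). If λ* is a maximizer of d (d(μ) ≤ d(λ*) for all μ ∈ ℝᵐ), then ‖λ⁺ − λ*‖² ≤ ‖λ − λ*‖² + 2βη. -/

import Mathlib

open RealInnerProductSpace


lemma grad_convex_ineq {F : Type*} [NormedAddCommGroup F] [InnerProductSpace ℝ F] [CompleteSpace F]
    {f : F → ℝ} (hf : ConvexOn ℝ Set.univ f) {x gx : F}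
    (h : HasGradientAt f gx x) (y : F) :
    f x + ⟪gx, y - x⟫ ≤ f y := by
  set v := y - x with hv
  have hfd : HasFDerivAt f (InnerProductSpace.toDual ℝ F gx) x :=
    hasGradientAt_iff_hasFDerivAt.mp h
  have hline : HasDerivAt (fun t : ℝ => x + t • v) v 0 := by
    simpa using ((hasDerivAt_id (0:ℝ)).smul_const v).const_add x
  have hfd' : HasFDerivAt f (InnerProductSpace.toDual ℝ F gx)
      ((fun t : ℝ => x + t • v) 0) := by simpa using hfd
  have hcomp : HasDerivAt (fun t : ℝ => f (x + t • v)) ⟪gx, v⟫ 0 := by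
    have := HasFDerivAt.comp_hasDerivAt (0:ℝ) hfd' hline
    simp only [InnerProductSpace.toDual_apply_apply] at this
    exact this
  have hphi : ConvexOn ℝ Set.univ (fun t : ℝ => f (x + t • v)) := by
    have := hf.comp_affineMap (AffineMap.lineMap x y)
    simp only [AffineMap.coe_lineMap, Set.preimage_univ] at this
    convert this using 2 with t
    case e'_12 => simp [Function.comp, hv, add_comm]
    all_goals rfl
  have hslope := hphi.le_slope_of_hasDerivAt (Set.mem_univ (0:ℝ)) (Set.mem_univ (1:ℝ))
    one_pos hcomp
  rw [slope_def_field] at hslope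
  simp only [one_smul, zero_smul, add_zero, hv] at hslope
  have h1 : x + (y - x) = y := by abel
  rw [h1] at hslope
  simp at hslope
  linarith

/-- **One-step dual distance inequality (proof of Lemma 3).**
Let `x⁺` be an `η`-approximate solution of the AL subproblem at `λ` and set
`λ⁺ := λ + β(Ax⁺ − b)`. If `λ*` maximizes `d`, then
`‖λ⁺ − λ*‖² ≤ ‖λ − λ*‖² + 2βη`. -/
theorem ial_one_step_dual_distance
    {n m : ℕ}
    (A : EuclideanSpace ℝ (Fin n) →L[ℝ] EuclideanSpace ℝ (Fin m))
    (b : EuclideanSpace ℝ (Fin m))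
    (f g : EuclideanSpace ℝ (Fin n) → ℝ)
    (f' : EuclideanSpace ℝ (Fin n) → EuclideanSpace ℝ (Fin n))
    (hf : ConvexOn ℝ Set.univ f)
    (hf' : ∀ x, HasGradientAt f (f' x) x)
    (hg : ConvexOn ℝ Set.univ g)
    (β : ℝ) (hβ : 0 < β)
    (L : EuclideanSpace ℝ (Fin n) → EuclideanSpace ℝ (Fin m) → ℝ)
    (hL : ∀ x lam, L x lam
        = f x + ⟪lam, A x - b⟫ + β / 2 * ‖A x - b‖ ^ 2 + g x)
    (d : EuclideanSpace ℝ (Fin m) → ℝ)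
    (hd : ∀ lam, IsLeast (Set.range fun x => L x lam) (d lam))
    (lam : EuclideanSpace ℝ (Fin m))
    (η : ℝ) (hη : 0 ≤ η)
    (xp : EuclideanSpace ℝ (Fin n))
    (happrox : ∀ y,
        ⟪f' xp + A.adjoint (lam + β • (A xp - b)), xp - y⟫ + g xp - g y ≤ η)
    (lamstar : EuclideanSpace ℝ (Fin m))
    (hstar : ∀ μ, d μ ≤ d lamstar) :
    ‖(lam + β • (A xp - b)) - lamstar‖ ^ 2 ≤ ‖lam - lamstar‖ ^ 2 + 2 * β * η := by
  set r := A xp - b with hr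
  set lamp := lam + β • r with hlamp
  have key1 : ∀ y, f xp + g xp + ⟪lamp, r⟫ - η ≤ L y lamp := by
    intro y
    have hgrad := grad_convex_ineq hf (hf' xp) y
    have happx := happrox y
    have hadj : ⟪A.adjoint lamp, xp - y⟫ = ⟪lamp, A xp - A y⟫ := by
      rw [ContinuousLinearMap.adjoint_inner_left]
      simp [map_sub]
    rw [inner_add_left, hadj] at happx
    have hsum : ⟪lamp, A xp - A y⟫ + ⟪lamp, A y - b⟫ = ⟪lamp, r⟫ := by
      rw [← inner_add_right]
      congr 1
      rw [hr]
      abel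
    have hcancel : ⟪f' xp, y - xp⟫ + ⟪f' xp, xp - y⟫ = 0 := by
      rw [← inner_add_right]
      simp
    have hpos : (0:ℝ) ≤ β / 2 * ‖A y - b‖ ^ 2 := by positivity
    rw [hL]
    linarith
  obtain ⟨x0, hx0⟩ := (hd lamp).1
  have key1' : f xp + g xp + ⟪lamp, r⟫ - η ≤ d lamp := hx0 ▸ key1 x0
  have key2 : d lamstar ≤ L xp lamstar := (hd lamstar).2 ⟨xp, rfl⟩
  rw [hL] at key2
  have hchain := le_trans key1' (le_trans (hstar lamp) key2)
  have hkey : ⟪lamp, r⟫ - ⟪lamstar, r⟫ ≤ η + β / 2 * ‖r‖ ^ 2 := by linarith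
  have hexp : lamp - lamstar = (lam - lamstar) + β • r := by
    rw [hlamp]; abel
  rw [hexp, norm_add_sq_real]
  have h1 : ⟪lam - lamstar, β • r⟫ = β * ⟪lam - lamstar, r⟫ := real_inner_smul_right _ _ _
  have h2 : ‖β • r‖ ^ 2 = β ^ 2 * ‖r‖ ^ 2 := by
    rw [norm_smul, mul_pow, Real.norm_eq_abs, sq_abs]
  have h3 : ⟪lam - lamstar, r⟫ = (⟪lamp, r⟫ - ⟪lamstar, r⟫) - β * ‖r‖ ^ 2 := by
    rw [hlamp, inner_sub_left, inner_add_left, real_inner_smul_left,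
      real_inner_self_eq_norm_sq]
    ring
  rw [h1, h2, h3]
  nlinarith [mul_le_mul_of_nonneg_left hkey (by positivity : (0:ℝ) ≤ 2 * β)]
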